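/- Fix a prime p, a finite p-group P, and a chain of subgroups P₀ ≤ P₁ ≤ ⋯ ≤ P_m = P each of which is normal in P, with P₀ contained in the Frattini subgroup Φ(P). Let α be an automorphism of P such that α(x)·x⁻¹ ∈ P_{i−1} for every 1 ≤ i ≤ m and every x ∈ P_i. Then the order of α is a power of p. -/

import Mathlib

open MulAction

/-- Coset fixed point lemma: if `β^q = 1` with `q` prime distinct from `p`, and all powers of `β`
move each element by an element of a `p`-subgroup `Φ`, then each right coset `Φ g` contains a
fixed point of `β`. -/
lemma aux_coset_fixed {p q : ℕ} (hp : p.Prime) (hq : q.Prime) (hpq : p ≠ q)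
    {P : Type*} [Group P] [Finite P] {Φ : Subgroup P} (hΦp : IsPGroup p Φ)
    (β : MulAut P) (hβq : β ^ q = 1)
    (hstab : ∀ (k : ℕ) (x : P), (β ^ k) x * x⁻¹ ∈ Φ) (g : P) :
    ∃ h : P, h * g⁻¹ ∈ Φ ∧ β h = h := by
  haveI : Fact p.Prime := ⟨hp⟩
  haveI : Fact q.Prime := ⟨hq⟩
  have hod : orderOf β ∣ q := orderOf_dvd_of_pow_eq_one hβq
  -- powers of β depend only on exponent mod q
  have hpow : ∀ m n : ℕ, m ≡ n [MOD q] → β ^ m = β ^ n := by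
    intro m n h
    exact pow_eq_pow_iff_modEq.mpr (h.of_dvd hod)
  set X := {h : P // h * g⁻¹ ∈ Φ} with hX
  -- action of ZMod q on X
  letI : SMul (Multiplicative (ZMod q)) X := ⟨fun k x =>
    ⟨(β ^ (Multiplicative.toAdd k).val) x.1, by
      have h1 := hstab (Multiplicative.toAdd k).val x.1
      have h2 := x.2
      have : (β ^ (Multiplicative.toAdd k).val) x.1 * g⁻¹
          = ((β ^ (Multiplicative.toAdd k).val) x.1 * x.1⁻¹) * (x.1 * g⁻¹) := by group
      rw [this]; exact mul_mem h1 h2⟩⟩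
  letI : MulAction (Multiplicative (ZMod q)) X :=
    { one_smul := by
        intro x
        apply Subtype.ext
        show (β ^ (Multiplicative.toAdd (1 : Multiplicative (ZMod q))).val) x.1 = x.1
        simp
      mul_smul := by
        intro a b x
        apply Subtype.ext
        show (β ^ (Multiplicative.toAdd (a * b)).val) x.1
            = (β ^ (Multiplicative.toAdd a).val) ((β ^ (Multiplicative.toAdd b).val) x.1)
        have : (β ^ (Multiplicative.toAdd a).val) ((β ^ (Multiplicative.toAdd b).val) x.1)
            = (β ^ ((Multiplicative.toAdd a).val + (Multiplicative.toAdd b).val)) x.1 := by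
          rw [pow_add]; rfl
        rw [this]
        congr 1
        apply hpow
        have : (Multiplicative.toAdd (a * b)).val
            = ((Multiplicative.toAdd a) + (Multiplicative.toAdd b)).val := rfl
        rw [this, ZMod.val_add]
        exact (Nat.mod_modEq _ q) }
  have hqgrp : IsPGroup q (Multiplicative (ZMod q)) := by
    apply IsPGroup.of_card (n := 1); simp [Nat.card_eq_fintype_card]
  have hmod := hqgrp.card_modEq_card_fixedPoints X
  -- card X = card Φ is a power of p
  have hcardX : ∃ n, Nat.card X = p ^ n := by
    obtain ⟨n, hn⟩ := IsPGroup.iff_card.mp hΦp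
    refine ⟨n, ?_⟩
    rw [← hn]
    apply Nat.card_congr
    exact Equiv.symm ⟨fun x => ⟨x.1 * g, by simp only [mul_inv_cancel_right]; exact x.2⟩,
      fun h => ⟨h.1 * g⁻¹, h.2⟩,
      fun x => by apply Subtype.ext; simp,
      fun h => by apply Subtype.ext; simp⟩
  obtain ⟨n, hn⟩ := hcardX
  -- fixed points nonempty
  have hne : (fixedPoints (Multiplicative (ZMod q)) X).Nonempty := by
    by_contra hemp
    rw [Set.not_nonempty_iff_eq_empty] at hemp
    have : Nat.card (fixedPoints (Multiplicative (ZMod q)) X) = 0 := by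
      simp [hemp]
    rw [this, hn] at hmod
    have hdvd : q ∣ p ^ n := (Nat.modEq_zero_iff_dvd).mp hmod
    exact hpq (((Nat.prime_dvd_prime_iff_eq hq hp).mp (hq.dvd_of_dvd_pow hdvd)).symm)
  obtain ⟨x, hx⟩ := hne
  refine ⟨x.1, x.2, ?_⟩
  have := hx (Multiplicative.ofAdd (1 : ZMod q))
  have h1 : (Multiplicative.ofAdd (1 : ZMod q)) • x = x := this
  have h2 : (β ^ ((1 : ZMod q)).val) x.1 = x.1 := congrArg Subtype.val h1
  rwa [ZMod.val_one, pow_one] at h2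

/-- **Statement 15.** Fix a prime `p`, a finite `p`-group `P`, and a chain of subgroups
`P₀ ≤ P₁ ≤ ⋯ ≤ P_m = P`, each normal in `P`, with `P₀ ≤ Φ(P)` (the Frattini subgroup).
Let `α` be an automorphism of `P` with `α(x)·x⁻¹ ∈ P_{i−1}` for every `1 ≤ i ≤ m` and
every `x ∈ P_i`.  Then the order of `α` is a power of `p`. -/
theorem stmt_15 (p : ℕ) (hp : p.Prime) (P : Type*) [Group P] [Finite P]
    (hP : IsPGroup p P) (m : ℕ) (C : ℕ → Subgroup P)
    (hchain : ∀ i < m, C i ≤ C (i + 1))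
    (hnormal : ∀ i ≤ m, (C i).Normal)
    (htop : C m = ⊤)
    (hfrattini : C 0 ≤ frattini P)
    (α : MulAut P)
    (hα : ∀ i, 1 ≤ i → i ≤ m → ∀ x ∈ C i, α x * x⁻¹ ∈ C (i - 1)) :
    ∃ k : ℕ, orderOf α = p ^ k := by
  haveI : Fact p.Prime := ⟨hp⟩
  -- degenerate case: m = 0 forces P trivial
  rcases Nat.eq_zero_or_pos m with hm0 | hm
  · subst hm0
    have hfr : frattini P = ⊤ := le_antisymm le_top (htop ▸ hfrattini)
    have hPtriv : ∀ x : P, x = 1 := by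
      intro x
      rcases eq_top_or_exists_le_coatom (⊥ : Subgroup P) with hb | ⟨M, hM, _⟩
      · have hx : x ∈ (⊥ : Subgroup P) := hb ▸ Subgroup.mem_top x
        exact hx
      · exact absurd (le_antisymm le_top (hfr ▸ frattini_le_coatom hM)) hM.1
    have hα1 : α = 1 := by
      ext x; rw [hPtriv (α x), hPtriv ((1 : MulAut P) x)]
    exact ⟨0, by rw [hα1, orderOf_one, pow_zero]⟩
  -- main case m ≥ 1
  have hford : orderOf α ≠ 0 := (orderOf_pos α).ne'
  suffices key : ∀ q : ℕ, q.Prime → q ∣ orderOf α → q = p by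
    exact ⟨_, Nat.eq_prime_pow_of_unique_prime_dvd hford fun hd hdvd => key _ hd hdvd⟩
  intro q hq hdvd
  by_contra hqp
  set β := α ^ (orderOf α / q) with hβdef
  have hordβ : orderOf β = q := orderOf_pow_orderOf_div hford hdvd
  have hβq : β ^ q = 1 := by rw [← hordβ]; exact pow_orderOf_eq_one β
  -- the chain-stabilizing property
  set S : MulAut P → Prop :=
    fun γ => ∀ i, 1 ≤ i → i ≤ m → ∀ x ∈ C i, γ x * x⁻¹ ∈ C (i - 1) with hSdef
  have hSinv : ∀ γ, S γ → ∀ i ≤ m, ∀ x ∈ C i, γ x ∈ C i := by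
    intro γ hγ i him x hx
    rcases Nat.eq_zero_or_pos i with rfl | h1
    · have hx1 : x ∈ C 1 := hchain 0 hm hx
      have h0 := hγ 1 le_rfl hm x hx1
      have hrw : γ x = γ x * x⁻¹ * x := by group
      rw [hrw]; exact mul_mem h0 hx
    · have h0 := hγ i h1 him x hx
      have hle : C (i - 1) ≤ C i := by
        have := hchain (i - 1) (by omega)
        rwa [Nat.sub_add_cancel h1] at this
      have hrw : γ x = γ x * x⁻¹ * x := by group
      rw [hrw]; exact mul_mem (hle h0) hx
  have hSmul : ∀ γ δ, S γ → S δ → S (γ * δ) := by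
    intro γ δ hγ hδ i h1 him x hx
    have hδx : δ x ∈ C i := hSinv δ hδ i him x hx
    have hrw : (γ * δ) x * x⁻¹ = (γ (δ x) * (δ x)⁻¹) * (δ x * x⁻¹) := by
      simp only [MulAut.mul_apply]; group
    rw [hrw]
    exact mul_mem (hγ i h1 him _ hδx) (hδ i h1 him x hx)
  have hS1 : S 1 := by
    intro i h1 him x hx
    simpa using one_mem (C (i - 1))
  have hSpow : ∀ k : ℕ, S (α ^ k) := by
    intro k
    induction k with
    | zero => simpa using hS1
    | succ k ih => rw [pow_succ]; exact hSmul _ _ ih hα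
  have hSβ : S β := hSpow _
  have hSβk : ∀ k : ℕ, S (β ^ k) := by
    intro k; rw [hβdef, ← pow_mul]; exact hSpow _
  -- descend the chain: β moves everything by an element of C 0
  haveI hN0 : (C 0).Normal := hnormal 0 (Nat.zero_le m)
  set π : P →* P ⧸ C 0 := QuotientGroup.mk' (C 0) with hπdef
  have hiff : ∀ a b : P, a * b⁻¹ ∈ C 0 ↔ π a = π b := by
    intro a b
    rw [QuotientGroup.mk'_eq_mk']
    constructor
    · intro h
      refine ⟨a⁻¹ * b, ?_, by group⟩
      have h2 : a⁻¹ * (a * b⁻¹) * a⁻¹⁻¹ ∈ C 0 := hN0.conj_mem _ h a⁻¹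
      have h3 : b⁻¹ * a ∈ C 0 := by
        have heq : a⁻¹ * (a * b⁻¹) * a⁻¹⁻¹ = b⁻¹ * a := by group
        rwa [heq] at h2
      have h4 := (C 0).inv_mem h3
      rwa [mul_inv_rev, inv_inv] at h4
    · rintro ⟨z, hz, rfl⟩
      have h2 : a * z⁻¹ * a⁻¹ ∈ C 0 := by
        have := hN0.conj_mem _ ((C 0).inv_mem hz) a
        simpa using this
      have heq : a * (a * z)⁻¹ = a * z⁻¹ * a⁻¹ := by group
      rwa [heq]
  have hfix : ∀ i ≤ m, ∀ x ∈ C i, β x * x⁻¹ ∈ C 0 := by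
    intro i
    induction i with
    | zero =>
      intro _ x hx
      have hx1 : x ∈ C 1 := hchain 0 hm hx
      simpa using hSβ 1 le_rfl hm x hx1
    | succ i ih =>
      intro him x hx
      have him' : i ≤ m := by omega
      set c := β x * x⁻¹ with hc
      have hcCi : c ∈ C i := by
        have := hSβ (i + 1) (by omega) him x hx
        simpa using this
      -- π (β^k c) = π c
      have hkc : ∀ k : ℕ, π ((β ^ k) c) = π c := by
        intro k
        induction k with
        | zero => simp
        | succ k ihk =>
          have hmem : (β ^ k) c ∈ C i := hSinv _ (hSβk k) i him' c hcCi
          have h1 : β ((β ^ k) c) * ((β ^ k) c)⁻¹ ∈ C 0 := ih him' _ hmem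
          have h2 : π (β ((β ^ k) c)) = π ((β ^ k) c) := (hiff _ _).mp h1
          have h3 : (β ^ (k + 1)) c = β ((β ^ k) c) := by
            rw [pow_succ']; rfl
          rw [h3, h2, ihk]
      -- π (β^k x) = (π c)^k * π x
      have hkx : ∀ k : ℕ, π ((β ^ k) x) = (π c) ^ k * π x := by
        intro k
        induction k with
        | zero => simp
        | succ k ihk =>
          have h3 : (β ^ (k + 1)) x = (β ^ k) (β x) := by
            rw [pow_succ]; rfl
          have h4 : β x = c * x := by rw [hc]; group
          rw [h3, h4, map_mul, map_mul, hkc k, ihk, pow_succ']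
          rw [mul_assoc]
      have hq1 : (π c) ^ q = 1 := by
        have h5 := hkx q
        rw [hβq] at h5
        simp only [MulAut.one_apply] at h5
        have h6 : (π c) ^ q * π x = π x := h5.symm
        exact mul_right_cancel (by rw [one_mul]; exact h6)
      -- π c lies in a p-group and has order dividing q ≠ p, hence π c = 1
      have hpg : IsPGroup p (P ⧸ C 0) := hP.to_quotient (C 0)
      obtain ⟨j, hj⟩ := hpg (π c)
      have hd1 : orderOf (π c) ∣ q := orderOf_dvd_of_pow_eq_one hq1
      have hd2 : orderOf (π c) ∣ p ^ j := orderOf_dvd_of_pow_eq_one hj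
      have hco : Nat.Coprime q (p ^ j) :=
        (Nat.coprime_primes hq hp).mpr hqp |>.pow_right j
      have hone : orderOf (π c) = 1 := Nat.eq_one_of_dvd_coprimes hco hd1 hd2
      have hc1 : π c = 1 := orderOf_eq_one_iff.mp hone
      have : c ∈ C 0 := (QuotientGroup.eq_one_iff c).mp hc1
      exact this
  -- hence β moves everything by an element of the Frattini subgroup
  have hΦ : ∀ x : P, β x * x⁻¹ ∈ frattini P := by
    intro x
    exact hfrattini (hfix m le_rfl x (htop ▸ Subgroup.mem_top x))
  have hΦk : ∀ (k : ℕ) (x : P), (β ^ k) x * x⁻¹ ∈ frattini P := by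
    intro k
    induction k with
    | zero => intro x; simpa using one_mem _
    | succ k ih =>
      intro x
      have h3 : (β ^ (k + 1)) x = β ((β ^ k) x) := by rw [pow_succ']; rfl
      have hrw : (β ^ (k + 1)) x * x⁻¹
          = (β ((β ^ k) x) * ((β ^ k) x)⁻¹) * ((β ^ k) x * x⁻¹) := by rw [h3]; group
      rw [hrw]
      exact mul_mem (hΦ _) (ih x)
  -- fixed-point subgroup
  set H : Subgroup P :=
    { carrier := {h : P | β h = h}
      mul_mem' := by intro a b ha hb; simp only [Set.mem_setOf_eq] at *; rw [map_mul, ha, hb]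
      one_mem' := by simp only [Set.mem_setOf_eq]; exact map_one β.toMonoidHom
      inv_mem' := by intro a ha; simp only [Set.mem_setOf_eq] at *; rw [map_inv, ha] } with hHdef
  have hHtop : H ⊔ frattini P = ⊤ := by
    rw [eq_top_iff]
    intro g _
    obtain ⟨h, hhg, hfixh⟩ := aux_coset_fixed hp hq (fun h => hqp h.symm) (hP.to_subgroup (frattini P))
      β hβq hΦk g
    have hgrw : g = (h * g⁻¹)⁻¹ * h := by group
    rw [hgrw]
    exact mul_mem (Subgroup.mem_sup_right ((frattini P).inv_mem hhg))
      (Subgroup.mem_sup_left hfixh)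
  have hHtop' : H = ⊤ := frattini_nongenerating (by rw [hHtop])
  have hβ1 : β = 1 := by
    ext x
    have : x ∈ H := hHtop' ▸ Subgroup.mem_top x
    exact this
  rw [hβ1, orderOf_one] at hordβ
  exact hq.one_lt.ne hordβ
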